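/- For the Bethe ansatz two-particle solution u(x_1,x_2) = A_{12} ξ_1^{x_1} ξ_2^{x_2} + A_{21} ξ_1^{x_2} ξ_2^{x_1}, the ASAP boundary condition u(x,x) = λ·u(x-1,x) + μ·u(x-1,x-1) holds for all x ∈ ℤ if and only if A_{21}/A_{12} = -(μ + λξ_2 - ξ_1ξ_2)/(μ + λξ_1 - ξ_1ξ_2), assuming A_{12} ≠ 0, ξ_1, ξ_2 ≠ 0, λ + μ = 1, and μ + λξ_1 - ξ_1ξ_2 ≠ 0. -/

import Mathlib

/-- For the Bethe ansatz two-particle solution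
u(x₁,x₂) = A₁₂ ξ₁^{x₁} ξ₂^{x₂} + A₂₁ ξ₁^{x₂} ξ₂^{x₁}, the ASAP boundary condition
u(x,x) = λ u(x-1,x) + μ u(x-1,x-1) holds for all x ∈ ℤ iff
A₂₁/A₁₂ = -(μ + λξ₂ - ξ₁ξ₂)/(μ + λξ₁ - ξ₁ξ₂). -/
theorem asap_smatrix {K : Type*} [Field K] (lam mu A12 A21 ξ1 ξ2 : K)
    (hA : A12 ≠ 0) (h1 : ξ1 ≠ 0) (h2 : ξ2 ≠ 0)
    (hsum : lam + mu = 1)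
    (hden : mu + lam * ξ1 - ξ1 * ξ2 ≠ 0)
    (u : ℤ → ℤ → K)
    (hu : ∀ x1 x2 : ℤ, u x1 x2 = A12 * ξ1 ^ x1 * ξ2 ^ x2 + A21 * ξ1 ^ x2 * ξ2 ^ x1) :
    (∀ x : ℤ, u x x = lam * u (x - 1) x + mu * u (x - 1) (x - 1)) ↔
    A21 / A12 = -((mu + lam * ξ2 - ξ1 * ξ2) / (mu + lam * ξ1 - ξ1 * ξ2)) := by
  have key : (A12 * (mu + lam * ξ2 - ξ1 * ξ2) + A21 * (mu + lam * ξ1 - ξ1 * ξ2) = 0) ↔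
      A21 / A12 = -((mu + lam * ξ2 - ξ1 * ξ2) / (mu + lam * ξ1 - ξ1 * ξ2)) := by
    rw [show -((mu + lam * ξ2 - ξ1 * ξ2) / (mu + lam * ξ1 - ξ1 * ξ2)) =
        (-(mu + lam * ξ2 - ξ1 * ξ2)) / (mu + lam * ξ1 - ξ1 * ξ2) from (neg_div _ _).symm,
      div_eq_div_iff hA hden]
    constructor <;> intro h <;> linear_combination h
  rw [← key]
  constructor
  · intro h
    have h1' := h 1
    rw [hu, hu, hu] at h1'
    norm_num at h1'
    linear_combination -h1'
  · intro h x
    rw [hu, hu, hu]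
    have hkey : (A12 + A21) * (ξ1 * ξ2) =
        lam * (A12 * ξ2 + A21 * ξ1) + mu * (A12 + A21) := by linear_combination -h
    have e1 : ξ1 ^ (x - 1) = ξ1 ^ x / ξ1 := by rw [zpow_sub₀ h1, zpow_one]
    have e2 : ξ2 ^ (x - 1) = ξ2 ^ x / ξ2 := by rw [zpow_sub₀ h2, zpow_one]
    rw [e1, e2]
    field_simp
    linear_combination hkey
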